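/- arXiv:2506.08419 — 3 statements merged into one kernel-verified Lean document; each statement's English description precedes it below -/
import Mathlib

section
/- Let {a_t}_{t=0}^{T−1} be a nonnegative real sequence and δ > 0. Then ∑_{t=0}^{T−1} a_t/(δ + ∑_{s=0}^{t} a_s) ≤ log(1 + (∑_{t=0}^{T−1} a_t)/δ). -/
/-- For a nonnegative sequence `a` and `δ > 0`,
`∑_{t=0}^{T−1} a_t / (δ + ∑_{s=0}^{t} a_s) ≤ log(1 + (∑_{t=0}^{T−1} a_t)/δ)`. -/
theorem sum_div_partial_sum_le_log
    (T : ℕ) (a : ℕ → ℝ) (ha : ∀ t, 0 ≤ a t) (δ : ℝ) (hδ : 0 < δ) :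
    ∑ t ∈ Finset.range T, a t / (δ + ∑ s ∈ Finset.range (t + 1), a s) ≤
      Real.log (1 + (∑ t ∈ Finset.range T, a t) / δ) := by
  have hS : ∀ n, 0 ≤ ∑ s ∈ Finset.range n, a s := fun n =>
    Finset.sum_nonneg fun i _ => ha i
  have key : ∀ n, ∑ t ∈ Finset.range n, a t / (δ + ∑ s ∈ Finset.range (t + 1), a s) ≤
      Real.log (δ + ∑ t ∈ Finset.range n, a t) - Real.log δ := by
    intro n
    induction n with
    | zero => simp
    | succ n ih =>
      rw [Finset.sum_range_succ, Finset.sum_range_succ]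
      have hx : 0 < δ + ∑ s ∈ Finset.range n, a s := by linarith [hS n]
      have hy : 0 < δ + (∑ s ∈ Finset.range n, a s + a n) := by linarith [hS n, ha n]
      have hstep : a n / (δ + (∑ s ∈ Finset.range n, a s + a n)) ≤
          Real.log (δ + (∑ s ∈ Finset.range n, a s + a n)) -
            Real.log (δ + ∑ s ∈ Finset.range n, a s) := by
      -- log y - log x ≥ 1 - x/y = (y-x)/y
        have h := Real.log_le_sub_one_of_pos (x := (δ + ∑ s ∈ Finset.range n, a s) /
            (δ + (∑ s ∈ Finset.range n, a s + a n))) (by positivity)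
        rw [Real.log_div (ne_of_gt hx) (ne_of_gt hy)] at h
        have : a n / (δ + (∑ s ∈ Finset.range n, a s + a n)) =
            1 - (δ + ∑ s ∈ Finset.range n, a s) / (δ + (∑ s ∈ Finset.range n, a s + a n)) := by
          field_simp
          ring
        linarith [this ▸ le_refl (a n / (δ + (∑ s ∈ Finset.range n, a s + a n)))]
      linarith
  calc ∑ t ∈ Finset.range T, a t / (δ + ∑ s ∈ Finset.range (t + 1), a s) ≤
      Real.log (δ + ∑ t ∈ Finset.range T, a t) - Real.log δ := key T
    _ = Real.log (1 + (∑ t ∈ Finset.range T, a t) / δ) := by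
        rw [← Real.log_div (ne_of_gt (by linarith [hS T])) (ne_of_gt hδ)]
        congr 1
        field_simp
end

section
/- Let α ∈ (0,1] and let (m_t), (g_t), (G_t) be sequences in ℝ^d satisfying m_0 = g_0 and m_t = (1−α)m_{t−1} + α g_t for all t ≥ 1, and set e_t = g_t − G_t. Then for every t ≥ 0, ‖m_t − G_t‖ ≤ (1−α)^t ‖e_0‖ + ‖∑_{s=1}^{t} α(1−α)^{t−s} e_s‖ + ∑_{s=1}^{t} (1−α)^{t−s+1} ‖G_{s−1} − G_s‖. -/
private lemma ema_unroll_id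
    (d : ℕ) (α : ℝ)
    (m g G : ℕ → EuclideanSpace ℝ (Fin d))
    (hm0 : m 0 = g 0)
    (hrec : ∀ t : ℕ, m (t + 1) = (1 - α) • m t + α • g (t + 1)) :
    ∀ t : ℕ,
      m t - G t =
        ((1 - α) ^ t) • (g 0 - G 0) +
          (∑ s ∈ Finset.Icc 1 t, (α * (1 - α) ^ (t - s)) • (g s - G s)) +
          ∑ s ∈ Finset.Icc 1 t, ((1 - α) ^ (t - s + 1)) • (G (s - 1) - G s) := by
  intro t
  induction t with
  | zero => simp [hm0]
  | succ t ih =>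
      have h1 : ∑ s ∈ Finset.Icc 1 (t+1), (α * (1 - α) ^ (t + 1 - s)) • (g s - G s)
          = (∑ s ∈ Finset.Icc 1 t, (α * (1 - α) ^ (t + 1 - s)) • (g s - G s))
            + (α * (1 - α) ^ 0) • (g (t+1) - G (t+1)) := by
        rw [Finset.sum_Icc_succ_top (by omega : 1 ≤ t + 1)]
        simp
      have h2 : ∑ s ∈ Finset.Icc 1 (t+1), ((1 - α) ^ (t + 1 - s + 1)) • (G (s-1) - G s)
          = (∑ s ∈ Finset.Icc 1 t, ((1 - α) ^ (t + 1 - s + 1)) • (G (s-1) - G s))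
            + ((1 - α) ^ 1) • (G t - G (t+1)) := by
        rw [Finset.sum_Icc_succ_top (by omega : 1 ≤ t + 1)]
        simp
      have e1 : ∑ s ∈ Finset.Icc 1 t, (α * (1 - α) ^ (t + 1 - s)) • (g s - G s)
          = (1 - α) • ∑ s ∈ Finset.Icc 1 t, (α * (1 - α) ^ (t - s)) • (g s - G s) := by
        rw [Finset.smul_sum]
        refine Finset.sum_congr rfl fun s hs => ?_
        have hst : s ≤ t := (Finset.mem_Icc.mp hs).2
        have : t + 1 - s = (t - s) + 1 := by omega
        rw [this, smul_smul, pow_succ]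
        ring_nf
      have e2 : ∑ s ∈ Finset.Icc 1 t, ((1 - α) ^ (t + 1 - s + 1)) • (G (s-1) - G s)
          = (1 - α) • ∑ s ∈ Finset.Icc 1 t, ((1 - α) ^ (t - s + 1)) • (G (s-1) - G s) := by
        rw [Finset.smul_sum]
        refine Finset.sum_congr rfl fun s hs => ?_
        have hst : s ≤ t := (Finset.mem_Icc.mp hs).2
        have : t + 1 - s + 1 = (t - s + 1) + 1 := by omega
        rw [this, smul_smul, pow_succ]
        ring_nf
      rw [h1, h2, e1, e2, hrec t]
      have hmt : m t = (m t - G t) + G t := by abel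
      rw [hmt, ih]
      rw [pow_succ]
      simp only [pow_zero, pow_one, mul_one]
      module
/-- Norm bound from unrolling the EMA recursion `m_t = (1−α)m_{t−1} + α g_t`
(with `m_0 = g_0`) against a reference sequence `G_t`, with `e_t = g_t − G_t`:
`‖m_t − G_t‖ ≤ (1−α)^t ‖e_0‖ + ‖∑_{s=1}^{t} α(1−α)^{t−s} e_s‖ + ∑_{s=1}^{t} (1−α)^{t−s+1}‖G_{s−1} − G_s‖`. -/
theorem ema_unroll_norm_bound
    (d : ℕ) (α : ℝ) (hα : α ∈ Set.Ioc (0:ℝ) 1)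
    (m g G : ℕ → EuclideanSpace ℝ (Fin d))
    (hm0 : m 0 = g 0)
    (hrec : ∀ t : ℕ, m (t + 1) = (1 - α) • m t + α • g (t + 1)) :
    ∀ t : ℕ,
      ‖m t - G t‖ ≤
        (1 - α) ^ t * ‖g 0 - G 0‖ +
          ‖∑ s ∈ Finset.Icc 1 t, (α * (1 - α) ^ (t - s)) • (g s - G s)‖ +
          ∑ s ∈ Finset.Icc 1 t, (1 - α) ^ (t - s + 1) * ‖G (s - 1) - G s‖ := by
  intro t
  have hα1 : (0:ℝ) ≤ 1 - α := by linarith [hα.2]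
  rw [ema_unroll_id d α m g G hm0 hrec t]
  refine le_trans norm_add₃_le ?_
  gcongr
  · rw [norm_smul, Real.norm_eq_abs, abs_of_nonneg (pow_nonneg hα1 t)]
  · refine le_trans (norm_sum_le _ _) ?_
    refine le_of_eq (Finset.sum_congr rfl fun s hs => ?_)
    rw [norm_smul, Real.norm_eq_abs, abs_of_nonneg (pow_nonneg hα1 _)]
end

section
/- Let S ≥ 0, M ≥ 0, A > 0, and η_max > 0, and set η* = min{ S/(12A), η_max }. If 0 ≤ −(η*/6)·S + A·(η*)² + M, then S ≤ 12√(A·M) + 12M/η_max. -/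
/-- For `S, M ≥ 0`, `A > 0`, `η_max > 0` and `η* = min {S/(12A), η_max}`,
if `0 ≤ −(η*/6)S + A(η*)² + M` then `S ≤ 12√(AM) + 12M/η_max`. -/
theorem case_analysis_grad_bound
    (S M A ηmax : ℝ) (hS : 0 ≤ S) (hM : 0 ≤ M) (hA : 0 < A) (hηmax : 0 < ηmax)
    (h : 0 ≤ -(min (S / (12 * A)) ηmax / 6) * S + A * (min (S / (12 * A)) ηmax) ^ 2 + M) :
    S ≤ 12 * Real.sqrt (A * M) + 12 * M / ηmax := by
  have hsqrt : 0 ≤ Real.sqrt (A * M) := Real.sqrt_nonneg _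
  have hMη : 0 ≤ 12 * M / ηmax := by positivity
  rcases le_total (S / (12 * A)) ηmax with hc | hc
  · rw [min_eq_left hc] at h
    have hS2 : S ^ 2 ≤ 144 * (A * M) := by
      have h12A : (0:ℝ) < 12 * A := by linarith
      have e : -(S / (12 * A) / 6) * S + A * (S / (12 * A)) ^ 2 = -(S^2) / (144*A) := by
        field_simp; ring
      rw [e] at h
      have h2 : S^2 / (144*A) ≤ M := by linarith [neg_div (144*A) (S^2)]
      have := (div_le_iff₀ (by positivity : (0:ℝ) < 144*A)).mp h2
      nlinarith
    have : S ≤ 12 * Real.sqrt (A * M) := by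
      have h1 : S ≤ Real.sqrt (S ^ 2) := by
        rw [Real.sqrt_sq hS]
      have h2 : Real.sqrt (S ^ 2) ≤ Real.sqrt (144 * (A * M)) :=
        Real.sqrt_le_sqrt hS2
      have h3 : Real.sqrt (144 * (A * M)) = 12 * Real.sqrt (A * M) := by
        rw [show (144:ℝ) = 12 ^ 2 by norm_num, Real.sqrt_mul (by positivity),
          Real.sqrt_sq (by norm_num)]
      linarith
    linarith
  · rw [min_eq_right hc] at h
    have hAη : A * ηmax ≤ S / 12 := by
      have h12A : (0:ℝ) < 12 * A := by linarith
      have := (le_div_iff₀ h12A).mp hc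
      linarith
    have : S * ηmax ≤ 12 * M := by nlinarith [sq_nonneg ηmax]
    have : S ≤ 12 * M / ηmax := by
      rw [le_div_iff₀ hηmax]; linarith
    linarith
end
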